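/- Let n ≥ 1, 𝒞 ≥ 0, z ≥ 0 and λ ∈ ℝ be such that H + z·J − λ·I is positive semidefinite, where J is the (n+1)×(n+1) all-ones matrix. Then for every pair of positive semidefinite matrices ρ, τ with tr ρ = tr τ = 1 and ρ + 𝒞τ diagonal, one has tr(Hρ) ≥ λ − z·(𝒞 + 1). -/

import Mathlib

open Real Matrix Complex ComplexOrder

/-- The complex `(n+1)×(n+1)` tridiagonal matrix `tridiag(-1, 2, -1)`. -/
noncomputable def HmatC (n : ℕ) : Matrix (Fin (n+1)) (Fin (n+1)) ℂ :=
  Matrix.of fun i j =>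
    if i = j then 2 else if ((i : ℤ) - (j : ℤ)).natAbs = 1 then -1 else 0

/-- The all-ones `(n+1)×(n+1)` matrix. -/
noncomputable def Jmat (n : ℕ) : Matrix (Fin (n+1)) (Fin (n+1)) ℂ :=
  Matrix.of fun _ _ => 1

lemma aux_trace_nonneg {m : Type*} [Fintype m] [DecidableEq m] {A : Matrix m m ℂ}
    (hA : A.PosSemidef) : 0 ≤ A.trace :=
  Finset.sum_nonneg fun i _ => by
    have := hA.dotProduct_mulVec_nonneg (Pi.single i 1)
    simpa [dotProduct, mulVec, Pi.single_apply] using this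

open scoped MatrixOrder in
lemma aux_trace_mul_nonneg {m : Type*} [Fintype m] [DecidableEq m] {A B : Matrix m m ℂ}
    (hA : A.PosSemidef) (hB : B.PosSemidef) : 0 ≤ (A * B).trace := by
  obtain ⟨C, rfl⟩ := CStarAlgebra.nonneg_iff_eq_star_mul_self.mp hA.nonneg
  rw [Matrix.mul_assoc, Matrix.trace_mul_comm]
  exact aux_trace_nonneg (hB.mul_mul_conjTranspose_same C)

lemma Jmat_posSemidef (n : ℕ) : (Jmat n).PosSemidef := by
  refine .of_dotProduct_mulVec_nonneg ?_ ?_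
  · ext i j; simp [Jmat, Matrix.conjTranspose_apply]
  · intro x
    have : star x ⬝ᵥ (Jmat n).mulVec x = star (∑ j, x j) * (∑ j, x j) := by
      simp [dotProduct, mulVec, Jmat, Finset.sum_mul, Finset.mul_sum]
      exact Finset.sum_comm ..
    rw [this]
    exact star_mul_self_nonneg _

lemma trace_J_diag (n : ℕ) (σ : Matrix (Fin (n+1)) (Fin (n+1)) ℂ)
    (h : ∀ i j, i ≠ j → σ i j = 0) : (Jmat n * σ).trace = σ.trace := by
  unfold Matrix.trace
  congr 1; ext i
  simp only [Matrix.diag_apply, Matrix.mul_apply, Jmat, Matrix.of_apply, one_mul]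
  exact Finset.sum_eq_single i (fun k _ hk => h k i hk) (by simp)

/-- If `H + zJ − λI ⪰ 0` then `tr(Hρ) ≥ λ − z(𝒞+1)` for every state `ρ` with
robustness of coherence at most `𝒞` (certified by a state `τ` with `ρ + 𝒞τ`
diagonal). -/
theorem dual_ansatz_lower_bound (n : ℕ) (hn : 1 ≤ n) (𝒞 z lam : ℝ)
    (h𝒞 : 0 ≤ 𝒞) (hz : 0 ≤ z)
    (hpsd : (HmatC n + (z : ℂ) • Jmat n
        - (lam : ℂ) • (1 : Matrix (Fin (n+1)) (Fin (n+1)) ℂ)).PosSemidef)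
    (ρ τ : Matrix (Fin (n+1)) (Fin (n+1)) ℂ)
    (hρ : ρ.PosSemidef) (hτ : τ.PosSemidef)
    (hρ1 : ρ.trace = 1) (hτ1 : τ.trace = 1)
    (hdiag : ∀ i j, i ≠ j → (ρ + (𝒞 : ℂ) • τ) i j = 0) :
    lam - z * (𝒞 + 1) ≤ (HmatC n * ρ).trace.re := by
  set a := (HmatC n * ρ).trace with ha
  set b := (Jmat n * ρ).trace with hb
  set c := (Jmat n * τ).trace with hc
  -- trace of the dual certificate times ρ is nonnegative
  have hM : 0 ≤ a + (z : ℂ) * b - (lam : ℂ) := by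
    have h0 := aux_trace_mul_nonneg hpsd hρ
    rw [Matrix.sub_mul, Matrix.add_mul, Matrix.smul_mul, Matrix.smul_mul, Matrix.one_mul,
      Matrix.trace_sub, Matrix.trace_add, Matrix.trace_smul, Matrix.trace_smul, hρ1] at h0
    simpa [smul_eq_mul] using h0
  -- the diagonal constraint
  have hJ : b + (𝒞 : ℂ) * c = 1 + (𝒞 : ℂ) := by
    have h1 := trace_J_diag n (ρ + (𝒞 : ℂ) • τ) hdiag
    rw [Matrix.mul_add, Matrix.mul_smul, Matrix.trace_add, Matrix.trace_smul,
      Matrix.trace_add, Matrix.trace_smul, hρ1, hτ1] at h1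
    simpa [smul_eq_mul] using h1
  have hcpos : 0 ≤ c := aux_trace_mul_nonneg (Jmat_posSemidef n) hτ
  -- pass to real parts
  rw [Complex.le_def] at hM hcpos
  have hM' : 0 ≤ a.re + z * b.re - lam := by
    have := hM.1
    simpa [Complex.add_re, Complex.sub_re, Complex.mul_re] using this
  have hJ' : b.re + 𝒞 * c.re = 1 + 𝒞 := by
    have := congrArg Complex.re hJ
    simpa [Complex.add_re, Complex.mul_re] using this
  have hcr : 0 ≤ c.re := by simpa using hcpos.1
  nlinarith [mul_le_mul_of_nonneg_left (show b.re ≤ 𝒞 + 1 by nlinarith) hz]
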